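/- For every multiplier λ, every t ∈ {1,…,T+1}, every joint state x = (x^1,…,x^n) ∈ ∏_{i=1}^n S_i and every v ∈ V, the joint relaxed value function decouples as L_t(x,v;λ) = ∑_{i=1}^n L^i_t(x^i,v;λ) − M_t(v;λ). (Theorem 3.1: the Lagrangian recursion of the weakly coupled stochastic unit commitment problem decomposes into one independent recursion per generator, minus the expected discounted penalty of the demand process.) -/

import Mathlib

open Finset

/-- Weakly coupled stochastic unit commitment setup. -/
structure UCSetup (T n : ℕ) (V D : Type) [Fintype V] [Fintype D]
    (S C : Fin n → Type) where
  P : Fin T → V → D → ℝ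
  ftil : Fin T → V → D → V
  d : V → ℝ
  A : Fin T → (i : Fin n) → S i → Finset (C i)
  z : (i : Fin n) → C i → ℝ
  g : Fin T → (i : Fin n) → S i → C i → ℝ
  f : Fin T → (i : Fin n) → S i → C i → D → S i
  A_nonempty : ∀ t i s, (A t i s).Nonempty
  P_nonneg : ∀ t v w, 0 ≤ P t v w
  P_sum_one : ∀ t v, (∑ w, P t v w) = 1

namespace UCSetup

variable {T n : ℕ} {V D : Type} [Fintype V] [Fintype D] {S C : Fin n → Type}

/-- Joint admissible action set at stage `t` in joint state `x`. -/
noncomputable def acts (u : UCSetup T n V D S C) (t : Fin T) (x : ∀ i, S i) :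
    Finset (∀ i, C i) :=
  Fintype.piFinset fun i => u.A t i (x i)

lemma acts_nonempty (u : UCSetup T n V D S C) (t : Fin T) (x : ∀ i, S i) :
    (u.acts t x).Nonempty :=
  Fintype.piFinset_nonempty.mpr fun i => u.A_nonempty t i (x i)

/-- Joint relaxed (Lagrangian) value functions, 0-indexed: stage `t ∈ {0,…,T-1}`
corresponds to period `t+1`, and `L T = 0` is the terminal value (period `T+1`). -/
noncomputable def L (u : UCSetup T n V D S C) (lam : Fin T → V → ℝ) (t : ℕ) :
    (∀ i, S i) → V → ℝ :=
  if h : t < T then fun x v =>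
    (u.acts ⟨t, h⟩ x).inf' (u.acts_nonempty ⟨t, h⟩ x) fun a =>
      (∑ i, u.g ⟨t, h⟩ i (x i) (a i))
        + lam ⟨t, h⟩ v * ((∑ i, u.z i (a i)) - u.d v)
        + ∑ w, u.P ⟨t, h⟩ v w *
            u.L lam (t + 1) (fun i => u.f ⟨t, h⟩ i (x i) (a i) w) (u.ftil ⟨t, h⟩ v w)
  else fun _ _ => 0
termination_by T - t
decreasing_by omega

/-- Per-generator relaxed value functions. -/
noncomputable def Li (u : UCSetup T n V D S C) (lam : Fin T → V → ℝ) (i : Fin n)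
    (t : ℕ) : S i → V → ℝ :=
  if h : t < T then fun x v =>
    (u.A ⟨t, h⟩ i x).inf' (u.A_nonempty ⟨t, h⟩ i x) fun a =>
      u.g ⟨t, h⟩ i x a + lam ⟨t, h⟩ v * u.z i a
        + ∑ w, u.P ⟨t, h⟩ v w *
            u.Li lam i (t + 1) (u.f ⟨t, h⟩ i x a w) (u.ftil ⟨t, h⟩ v w)
  else fun _ _ => 0
termination_by T - t
decreasing_by omega

/-- Expected discounted multiplier-weighted demand along the summary chain:
`M t v = ∑_{r=t}^{T-1} E[λ_r(v_r)·d(v_r) | v_t = v]`. -/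
noncomputable def M (u : UCSetup T n V D S C) (lam : Fin T → V → ℝ) (t : ℕ) :
    V → ℝ :=
  if h : t < T then fun v =>
    lam ⟨t, h⟩ v * u.d v
      + ∑ w, u.P ⟨t, h⟩ v w * u.M lam (t + 1) (u.ftil ⟨t, h⟩ v w)
  else fun _ => 0
termination_by T - t
decreasing_by omega

open Classical in
/-- Feasible joint action set: admissible actions whose total production meets demand. -/
noncomputable def feas (u : UCSetup T n V D S C) (t : Fin T) (x : ∀ i, S i) (v : V) :
    Finset (∀ i, C i) :=
  (u.acts t x).filter fun a => (∑ i, u.z i (a i)) = u.d v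

/-- Constrained value functions (demand constraint enforced). -/
noncomputable def J (u : UCSetup T n V D S C)
    (hfeas : ∀ t x v, (u.feas t x v).Nonempty) (t : ℕ) : (∀ i, S i) → V → ℝ :=
  if h : t < T then fun x v =>
    (u.feas ⟨t, h⟩ x v).inf' (hfeas ⟨t, h⟩ x v) fun a =>
      (∑ i, u.g ⟨t, h⟩ i (x i) (a i))
        + ∑ w, u.P ⟨t, h⟩ v w *
            u.J hfeas (t + 1) (fun i => u.f ⟨t, h⟩ i (x i) (a i) w) (u.ftil ⟨t, h⟩ v w)
  else fun _ _ => 0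
termination_by T - t
decreasing_by omega

/-- Lagrangian value functions of a fixed Markov policy `π`. -/
noncomputable def W (u : UCSetup T n V D S C) (lam : Fin T → V → ℝ)
    (π : Fin T → (∀ i, S i) → V → ∀ i, C i) (t : ℕ) : (∀ i, S i) → V → ℝ :=
  if h : t < T then fun x v =>
    (∑ i, u.g ⟨t, h⟩ i (x i) (π ⟨t, h⟩ x v i))
      + lam ⟨t, h⟩ v * ((∑ i, u.z i (π ⟨t, h⟩ x v i)) - u.d v)
      + ∑ w, u.P ⟨t, h⟩ v w *
          u.W lam π (t + 1) (fun i => u.f ⟨t, h⟩ i (x i) (π ⟨t, h⟩ x v i) w)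
            (u.ftil ⟨t, h⟩ v w)
  else fun _ _ => 0
termination_by T - t
decreasing_by omega

/-- A Markov policy is admissible if each component action is in the admissible set. -/
def IsPolicy (u : UCSetup T n V D S C)
    (π : Fin T → (∀ i, S i) → V → ∀ i, C i) : Prop :=
  ∀ t x v i, π t x v i ∈ u.A t i (x i)

end UCSetup


lemma piFinset_inf'_sum {n : ℕ} {C : Fin n → Type}
    (s : ∀ i, Finset (C i)) (hs : ∀ i, (s i).Nonempty) (f : ∀ i, C i → ℝ) :
    (Fintype.piFinset s).inf' (Fintype.piFinset_nonempty.mpr hs)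
        (fun a => ∑ i, f i (a i)) = ∑ i, (s i).inf' (hs i) (f i) := by
  apply le_antisymm
  · choose b hb hbeq using fun i => Finset.exists_mem_eq_inf' (hs i) (f i)
    calc (Fintype.piFinset s).inf' _ (fun a => ∑ i, f i (a i))
        ≤ ∑ i, f i (b i) := Finset.inf'_le _ (Fintype.mem_piFinset.mpr hb)
      _ = ∑ i, (s i).inf' (hs i) (f i) := by
          exact Finset.sum_congr rfl fun i _ => (hbeq i).symm
  · apply Finset.le_inf'
    intro a ha
    exact Finset.sum_le_sum fun i _ =>
      Finset.inf'_le _ (Fintype.mem_piFinset.mp ha i)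

lemma lagrangian_decomposition_aux
    {T n : ℕ}
    {V D : Type} [Fintype V] [Fintype D]
    {S C : Fin n → Type}
    (u : UCSetup T n V D S C)
    (lam : Fin T → V → ℝ) (t : ℕ) (x : ∀ i, S i) (v : V) :
    u.L lam t x v = (∑ i, u.Li lam i t (x i) v) - u.M lam t v := by
  by_cases h : t < T
  · have IH : ∀ (y : ∀ i, S i) (w : V),
        u.L lam (t + 1) y w = (∑ i, u.Li lam i (t + 1) (y i) w) - u.M lam (t + 1) w :=
      fun y w => lagrangian_decomposition_aux u lam (t + 1) y w
    have hM : u.M lam t v = lam ⟨t, h⟩ v * u.d v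
        + ∑ w, u.P ⟨t, h⟩ v w * u.M lam (t + 1) (u.ftil ⟨t, h⟩ v w) := by
      rw [UCSetup.M, dif_pos h]
    have hLi : ∀ i, u.Li lam i t (x i) v =
        (u.A ⟨t, h⟩ i (x i)).inf' (u.A_nonempty ⟨t, h⟩ i (x i)) (fun a =>
          u.g ⟨t, h⟩ i (x i) a + lam ⟨t, h⟩ v * u.z i a
            + ∑ w, u.P ⟨t, h⟩ v w *
                u.Li lam i (t + 1) (u.f ⟨t, h⟩ i (x i) a w) (u.ftil ⟨t, h⟩ v w)) := by
      intro i; rw [UCSetup.Li, dif_pos h]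
    rw [UCSetup.L, dif_pos h]
    have step : ∀ a ∈ u.acts ⟨t, h⟩ x,
        ((∑ i, u.g ⟨t, h⟩ i (x i) (a i))
          + lam ⟨t, h⟩ v * ((∑ i, u.z i (a i)) - u.d v)
          + ∑ w, u.P ⟨t, h⟩ v w *
              u.L lam (t + 1) (fun i => u.f ⟨t, h⟩ i (x i) (a i) w) (u.ftil ⟨t, h⟩ v w))
        = (∑ i, (u.g ⟨t, h⟩ i (x i) (a i) + lam ⟨t, h⟩ v * u.z i (a i)
            + ∑ w, u.P ⟨t, h⟩ v w *
                u.Li lam i (t + 1) (u.f ⟨t, h⟩ i (x i) (a i) w) (u.ftil ⟨t, h⟩ v w)))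
          - u.M lam t v := by
      intro a _
      simp only [IH, hM, mul_sub, Finset.sum_sub_distrib, Finset.mul_sum, Finset.sum_add_distrib]
      rw [Finset.sum_comm]
      ring
    rw [Finset.inf'_congr (u.acts_nonempty ⟨t, h⟩ x) rfl step]
    have sub_lem := Finset.apply_inf'_eq_inf'_comp (u.acts_nonempty ⟨t, h⟩ x)
      (f := fun a => ∑ i, (u.g ⟨t, h⟩ i (x i) (a i) + lam ⟨t, h⟩ v * u.z i (a i)
            + ∑ w, u.P ⟨t, h⟩ v w *
                u.Li lam i (t + 1) (u.f ⟨t, h⟩ i (x i) (a i) w) (u.ftil ⟨t, h⟩ v w)))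
      (fun r => r - u.M lam t v) (fun p q => (min_sub_sub_right p q _).symm)
    rw [Function.comp_def] at sub_lem
    rw [← sub_lem]
    congr 1
    exact (piFinset_inf'_sum (fun i => u.A ⟨t, h⟩ i (x i))
        (fun i => u.A_nonempty ⟨t, h⟩ i (x i))
        (fun i a => u.g ⟨t, h⟩ i (x i) a + lam ⟨t, h⟩ v * u.z i a
            + ∑ w, u.P ⟨t, h⟩ v w *
                u.Li lam i (t + 1) (u.f ⟨t, h⟩ i (x i) a w) (u.ftil ⟨t, h⟩ v w))).trans
      (Finset.sum_congr rfl fun i _ => (hLi i).symm)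
  · rw [UCSetup.L, dif_neg h, UCSetup.M, dif_neg h]
    have hz : ∀ i, u.Li lam i t (x i) v = 0 := fun i => by rw [UCSetup.Li, dif_neg h]
    simp [hz]
termination_by T - t
decreasing_by omega

/-- **Theorem 3.1 (decomposition of the Lagrangian recursion).**
For every multiplier `λ`, every stage `t` (0-indexed, `t ≤ T`, corresponding to
periods `1,…,T+1`), every joint state `x` and every demand-summary state `v`,
`L_t(x,v;λ) = ∑_{i=1}^n L^i_t(x^i,v;λ) − M_t(v;λ)`. -/
theorem lagrangian_decomposition
    {T n : ℕ} (hT : 1 ≤ T) (hn : 1 ≤ n)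
    {V D : Type} [Fintype V] [Fintype D] [Nonempty V] [Nonempty D]
    {S C : Fin n → Type} [∀ i, Fintype (S i)] [∀ i, Fintype (C i)]
    [∀ i, Nonempty (S i)] [∀ i, Nonempty (C i)]
    (u : UCSetup T n V D S C)
    (lam : Fin T → V → ℝ) (t : ℕ) (ht : t ≤ T) (x : ∀ i, S i) (v : V) :
    u.L lam t x v = (∑ i, u.Li lam i t (x i) v) - u.M lam t v := by
  exact lagrangian_decomposition_aux u lam t x v
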